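/- Let n be a positive integer and ζ_n a primitive n-th root of unity in ℂ. For all integers k ≥ 1, r ≥ 1, s ≥ 0 with r ≥ s and k ≥ r+s, the sum Σ_{k ∈ I(k,r,s)} z̄_n(k; ζ_n), taken over all indices of weight k, depth r, and height s, is a rational number. -/

import Mathlib

open Finset

/-- The set of tuples `(m_1,...,m_r)` with `n > m_1 > m_2 > ... > m_r > 0`. -/
def msets (n r : ℕ) : Finset (Fin r → Fin n) :=
  Finset.univ.filter fun m =>
    (∀ i j : Fin r, i < j → m j < m i) ∧ ∀ i, 0 < (m i : ℕ)

/-- The set of tuples `(m_1,...,m_r)` with `n > m_1 ≥ m_2 ≥ ... ≥ m_r > 0`. -/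
def msetsStar (n r : ℕ) : Finset (Fin r → Fin n) :=
  Finset.univ.filter fun m =>
    (∀ i j : Fin r, i ≤ j → m j ≤ m i) ∧ ∀ i, 0 < (m i : ℕ)

/-- The finite multiple harmonic q-series
`z_n(k_1,…,k_r; q) = Σ_{n > m_1 > … > m_r > 0} Π_i q^{(k_i-1)m_i}/[m_i]_q^{k_i}`,
where `[m]_q = (1-q^m)/(1-q)`. -/
noncomputable def z (n : ℕ) {r : ℕ} (k : Fin r → ℕ) (q : ℂ) : ℂ :=
  ∑ m ∈ msets n r,
    ∏ i, q ^ ((k i - 1) * (m i : ℕ)) / ((1 - q ^ (m i : ℕ)) / (1 - q)) ^ (k i)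

/-- The star version `z*_n(k; q)`, summed over `n > m_1 ≥ … ≥ m_r > 0`. -/
noncomputable def zstar (n : ℕ) {r : ℕ} (k : Fin r → ℕ) (q : ℂ) : ℂ :=
  ∑ m ∈ msetsStar n r,
    ∏ i, q ^ ((k i - 1) * (m i : ℕ)) / ((1 - q ^ (m i : ℕ)) / (1 - q)) ^ (k i)

/-- The modified value `z̄_n(k;q) = (1-q)^{-wt(k)} z_n(k;q)`. -/
noncomputable def zbar (n : ℕ) {r : ℕ} (k : Fin r → ℕ) (q : ℂ) : ℂ :=
  (1 - q)⁻¹ ^ (∑ i, k i) * z n k q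

/-- The modified star value `z̄*_n(k;q) = (1-q)^{-wt(k)} z*_n(k;q)`. -/
noncomputable def zstarbar (n : ℕ) {r : ℕ} (k : Fin r → ℕ) (q : ℂ) : ℂ :=
  (1 - q)⁻¹ ^ (∑ i, k i) * zstar n k q

/-- `I(k,r,s)`: the set of indices (tuples of positive integers) of weight `k`,
depth `r` and height `s`. -/
def indexSet3 (k r s : ℕ) : Finset (Fin r → ℕ) :=
  (Finset.Nat.antidiagonalTuple r k).filter fun a =>
    (∀ i, 1 ≤ a i) ∧ (Finset.univ.filter fun i => 2 ≤ a i).card = s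

/-- `I(k,r)`: the set of indices of weight `k` and depth `r`. -/
def indexSet2 (k r : ℕ) : Finset (Fin r → ℕ) :=
  (Finset.Nat.antidiagonalTuple r k).filter fun a => ∀ i, 1 ≤ a i

/-- The one-variable finite q-multiple polylogarithm
`L_{k_1,…,k_r}^{(n)}(t;q) = Σ_{n > m_1 > … > m_r > 0} t^{m_1} / Π_i (1-q^{m_i})^{k_i}`,
with `L_∅(t) = 1`. -/
noncomputable def Lpoly (n : ℕ) {r : ℕ} (k : Fin r → ℕ) (q t : ℂ) : ℂ :=
  ∑ m ∈ msets n r,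
    ∏ i : Fin r, (if i.val = 0 then t ^ (m i : ℕ) else 1) / (1 - q ^ (m i : ℕ)) ^ (k i)

/-- The star version `L*_{k_1,…,k_r}^{(n)}(t;q)`, summed over `n > m_1 ≥ … ≥ m_r > 0`. -/
noncomputable def LpolyStar (n : ℕ) {r : ℕ} (k : Fin r → ℕ) (q t : ℂ) : ℂ :=
  ∑ m ∈ msetsStar n r,
    ∏ i : Fin r, (if i.val = 0 then t ^ (m i : ℕ) else 1) / (1 - q ^ (m i : ℕ)) ^ (k i)

section Sorting

variable {n r : ℕ}

lemma mem_msets_iff {m : Fin r → Fin n} :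
    m ∈ msets n r ↔ (∀ i j : Fin r, i < j → m j < m i) ∧ ∀ i, 0 < (m i : ℕ) := by
  simp [msets]

lemma injective_of_strictAntiOn {m : Fin r → Fin n}
    (h : ∀ i j : Fin r, i < j → m j < m i) : Function.Injective m := by
  intro i j hij
  rcases lt_trichotomy i j with hc | hc | hc
  · exact absurd hij (h i j hc).ne'
  · exact hc
  · exact absurd hij (h j i hc).ne

lemma card_image_univ {v : Fin r → Fin n} (hv : Function.Injective v) :
    (Finset.univ.image v).card = r := by
  rw [Finset.card_image_of_injective _ hv, Finset.card_univ, Fintype.card_fin]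

/-- decreasing sort of an injective tuple -/
noncomputable def descSort (v : Fin r → Fin n) : Fin r → Fin n :=
  if h : (Finset.univ.image v).card = r then (Finset.univ.image v).orderEmbOfFin h ∘ Fin.rev
  else v

lemma orderEmbOfFin_coe_congr {s t : Finset (Fin n)} (hs : s.card = r) (ht : t.card = r)
    (h : s = t) : ⇑(s.orderEmbOfFin hs) = ⇑(t.orderEmbOfFin ht) := by
  subst h; rfl

lemma descSort_def {v : Fin r → Fin n} (hv : Function.Injective v) :
    descSort v = (Finset.univ.image v).orderEmbOfFin (card_image_univ hv) ∘ Fin.rev := by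
  rw [descSort, dif_pos (card_image_univ hv)]

lemma descSort_congr {v w : Fin r → Fin n} (hv : Function.Injective v)
    (hw : Function.Injective w)
    (h : Finset.univ.image v = Finset.univ.image w) : descSort v = descSort w := by
  rw [descSort_def hv, descSort_def hw,
    orderEmbOfFin_coe_congr (card_image_univ hv) (card_image_univ hw) h]

lemma descSort_injective {v : Fin r → Fin n} (hv : Function.Injective v) :
    Function.Injective (descSort v) := by
  rw [descSort_def hv]
  exact ((Finset.univ.image v).orderEmbOfFin (card_image_univ hv)).injective.comp
    fun a b h => by simpa using congrArg Fin.rev h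

lemma range_coe_image (v : Fin r → Fin n) :
    Set.range v = ↑(Finset.univ.image v) := by
  rw [Finset.coe_image, Finset.coe_univ, Set.image_univ]

lemma image_descSort {v : Fin r → Fin n} (hv : Function.Injective v) :
    Finset.univ.image (descSort v) = Finset.univ.image v := by
  have h1 : Set.range (descSort v) = Set.range ((Finset.univ.image v).orderEmbOfFin
      (card_image_univ hv)) := by
    rw [descSort_def hv]
    rw [Set.range_comp, Fin.rev_surjective.range_eq, Set.image_univ]
  rw [← Finset.coe_inj, ← range_coe_image, h1, Finset.range_orderEmbOfFin]

lemma descSort_mem_msets {v : Fin r → Fin n} (hv : Function.Injective v)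
    (hpos : ∀ i, 0 < (v i : ℕ)) : descSort v ∈ msets n r := by
  rw [mem_msets_iff]
  constructor
  · intro i j hij
    rw [descSort_def hv]
    exact ((Finset.univ.image v).orderEmbOfFin (card_image_univ hv)).strictMono
      (by simpa [Fin.rev_lt_rev] using hij)
  · intro i
    have : descSort v i ∈ Finset.univ.image v := by
      rw [descSort_def hv]
      exact Finset.orderEmbOfFin_mem _ _ _
    obtain ⟨t, _, ht⟩ := Finset.mem_image.mp this
    rw [← ht]; exact hpos t

lemma descSort_eq_self {m : Fin r → Fin n} (hm : m ∈ msets n r) : descSort m = m := by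
  rw [mem_msets_iff] at hm
  have hinj := injective_of_strictAntiOn hm.1
  have hmono : StrictMono (m ∘ Fin.rev) := by
    intro i j hij
    exact hm.1 _ _ (by simpa [Fin.rev_lt_rev] using hij)
  have hfs : ∀ x, (m ∘ Fin.rev) x ∈ Finset.univ.image m := fun x =>
    Finset.mem_image_of_mem m (Finset.mem_univ _)
  have := Finset.orderEmbOfFin_unique (card_image_univ hinj) hfs hmono
  rw [descSort_def hinj]
  funext i
  have := congrFun this.symm (Fin.rev i)
  simpa [Fin.rev_rev] using this

lemma exists_sortPerm {v : Fin r → Fin n} (hv : Function.Injective v) :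
    ∃ ρ : Equiv.Perm (Fin r), ∀ i, v (ρ i) = descSort v i := by
  have hu : Function.Injective (descSort v) := descSort_injective hv
  have hran : Set.range (descSort v) = Set.range v := by
    rw [range_coe_image, range_coe_image, image_descSort hv]
  refine ⟨(Equiv.ofInjective _ hu).trans ((Equiv.setCongr hran).trans
    (Equiv.ofInjective v hv).symm), fun i => ?_⟩
  simp [Equiv.apply_ofInjective_symm]

noncomputable def sortPerm (v : Fin r → Fin n) : Equiv.Perm (Fin r) :=
  if hv : Function.Injective v then Classical.choose (exists_sortPerm hv) else Equiv.refl _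

lemma sortPerm_spec {v : Fin r → Fin n} (hv : Function.Injective v) (i : Fin r) :
    v (sortPerm v i) = descSort v i := by
  rw [sortPerm, dif_pos hv]
  exact Classical.choose_spec (exists_sortPerm hv) i

end Sorting

section Comb

lemma indexSet3_comp_perm {k r s : ℕ} {a : Fin r → ℕ} (ha : a ∈ indexSet3 k r s)
    (ρ : Equiv.Perm (Fin r)) : a ∘ ρ ∈ indexSet3 k r s := by
  simp only [indexSet3, Finset.mem_filter, Finset.Nat.mem_antidiagonalTuple] at ha ⊢
  obtain ⟨hsum, hpos, hcard⟩ := ha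
  refine ⟨by simpa [Equiv.sum_comp ρ a] using hsum, fun i => hpos (ρ i), ?_⟩
  rw [← hcard]
  exact Finset.card_bij (fun i _ => ρ i)
    (fun i hi => by simpa using (Finset.mem_filter.mp hi).2)
    (fun i _ j _ h => ρ.injective h)
    (fun j hj => ⟨ρ.symm j, by simpa using (Finset.mem_filter.mp hj).2, by simp⟩)

lemma sum_comp_equiv {n r k s : ℕ} {M : Type*} [CommRing M] (f : Fin n → ℕ → M)
    (ε : Equiv.Perm (Fin n)) (hε : ∀ x : Fin n, 0 < ((ε x : Fin n) : ℕ) ↔ 0 < (x : ℕ)) :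
    ∑ p ∈ msets n r ×ˢ indexSet3 k r s, ∏ i, f (ε (p.1 i)) (p.2 i)
      = ∑ p ∈ msets n r ×ˢ indexSet3 k r s, ∏ i, f (p.1 i) (p.2 i) := by
  have minj : ∀ {m : Fin r → Fin n}, m ∈ msets n r → Function.Injective m := fun hm =>
    injective_of_strictAntiOn ((mem_msets_iff.mp hm).1)
  have keyinj : ∀ {m : Fin r → Fin n}, m ∈ msets n r → Function.Injective (ε ∘ m) :=
    fun hm => ε.injective.comp (minj hm)
  have keypos : ∀ {m : Fin r → Fin n}, m ∈ msets n r → ∀ i, 0 < ((ε (m i) : Fin n) : ℕ) :=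
    fun hm i => (hε _).mpr ((mem_msets_iff.mp hm).2 i)
  have image_eps : ∀ m : Fin r → Fin n,
      Finset.univ.image (ε ∘ m) = (Finset.univ.image m).image ε := fun m =>
    (Finset.image_image).symm
  refine Finset.sum_bij
    (fun p _ => (descSort (ε ∘ p.1), p.2 ∘ sortPerm (ε ∘ p.1))) ?_ ?_ ?_ ?_
  · rintro ⟨m, a⟩ hp
    rw [Finset.mem_product] at hp ⊢
    exact ⟨descSort_mem_msets (keyinj hp.1) (keypos hp.1),
      indexSet3_comp_perm hp.2 _⟩
  · rintro ⟨m, a⟩ hp ⟨m', a'⟩ hp' h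
    rw [Finset.mem_product] at hp hp'
    have hm : m ∈ msets n r := hp.1
    have hm' : m' ∈ msets n r := hp'.1
    rw [Prod.ext_iff] at h
    have h1 : descSort (ε ∘ m) = descSort (ε ∘ m') := h.1
    have h2 : a ∘ sortPerm (ε ∘ m) = a' ∘ sortPerm (ε ∘ m') := h.2
    have h3 : Finset.univ.image (ε ∘ m) = Finset.univ.image (ε ∘ m') := by
      rw [← image_descSort (keyinj hm), ← image_descSort (keyinj hm'), h1]
    have himg : Finset.univ.image m = Finset.univ.image m' := by
      rw [image_eps, image_eps] at h3
      have h4 := congrArg (Finset.image ε.symm) h3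
      simpa [Finset.image_image, Function.comp_def] using h4
    have hmm : m = m' := by
      rw [← descSort_eq_self hm, ← descSort_eq_self hm']
      exact descSort_congr (minj hm) (minj hm') himg
    subst hmm
    have haa : a = a' := by
      funext i
      have h5 := congrFun h2 ((sortPerm (ε ∘ m)).symm i)
      simpa using h5
    rw [haa]
  · rintro ⟨w, b⟩ hp
    rw [Finset.mem_product] at hp
    have hw : w ∈ msets n r := hp.1
    have hb : b ∈ indexSet3 k r s := hp.2
    have hεinvpos : ∀ i, 0 < ((ε.symm (w i) : Fin n) : ℕ) := by
      intro i
      have h4 := hε (ε.symm (w i))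
      rw [Equiv.apply_symm_apply] at h4
      exact h4.mp ((mem_msets_iff.mp hw).2 i)
    have hwinj' : Function.Injective (ε.symm ∘ w) := ε.symm.injective.comp (minj hw)
    have hmmem : descSort (ε.symm ∘ w) ∈ msets n r := descSort_mem_msets hwinj' hεinvpos
    have himg2 : Finset.univ.image (ε ∘ descSort (ε.symm ∘ w)) = Finset.univ.image w := by
      calc Finset.univ.image (ε ∘ descSort (ε.symm ∘ w))
          = (Finset.univ.image (descSort (ε.symm ∘ w))).image ε := image_eps _
        _ = (Finset.univ.image (ε.symm ∘ w)).image ε := by rw [image_descSort hwinj']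
        _ = Finset.univ.image (ε ∘ (ε.symm ∘ w)) := Finset.image_image
        _ = Finset.univ.image w := by
            have hcomp : ε ∘ (ε.symm ∘ w) = w := by funext x; simp
            rw [hcomp]
    have hds : descSort (ε ∘ descSort (ε.symm ∘ w)) = w := by
      rw [descSort_congr (keyinj hmmem) (minj hw) himg2, descSort_eq_self hw]
    refine ⟨(descSort (ε.symm ∘ w), b ∘ (sortPerm (ε ∘ descSort (ε.symm ∘ w))).symm),
      Finset.mem_product.mpr ⟨hmmem, indexSet3_comp_perm hb _⟩, ?_⟩
    refine Prod.ext_iff.mpr ⟨hds, ?_⟩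
    funext i
    simp
  · rintro ⟨m, a⟩ hp
    rw [Finset.mem_product] at hp
    have hm : m ∈ msets n r := hp.1
    calc ∏ i, f (ε (m i)) (a i)
        = ∏ i, f (ε (m (sortPerm (ε ∘ m) i))) (a (sortPerm (ε ∘ m) i)) :=
          (Equiv.prod_comp (sortPerm (ε ∘ m)) fun j => f (ε (m j)) (a j)).symm
      _ = ∏ i, f (descSort (ε ∘ m) i) ((a ∘ sortPerm (ε ∘ m)) i) := by
          refine Finset.prod_congr rfl fun i _ => ?_
          rw [← sortPerm_spec (keyinj hm) i]
          rfl

end Comb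

open IntermediateField

/-- the sum of `z̄_n(k; ζ_n)` over indices of fixed weight, depth and
height is rational. -/
theorem zbar_sum_weight_depth_height_rational (n : ℕ) (hn : 0 < n) (ζ : ℂ)
    (hζ : IsPrimitiveRoot ζ n) (k r s : ℕ) (hk : 1 ≤ k) (hr : 1 ≤ r)
    (hsr : s ≤ r) (hkrs : r + s ≤ k) :
    ∃ c : ℚ, ∑ a ∈ indexSet3 k r s, zbar n a ζ = (c : ℂ) := by
  classical
  by_cases hn1 : n = 1
  · subst hn1
    have hempty : msets 1 r = ∅ := by
      ext m
      simp only [mem_msets_iff, Finset.notMem_empty, iff_false, not_and]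
      intro _
      intro hpos
      have h1 := hpos ⟨0, hr⟩
      have h2 := (m ⟨0, hr⟩).isLt
      omega
    exact ⟨0, by simp [zbar, z, hempty]⟩
  have hn2 : 1 < n := by omega
  haveI : NeZero n := ⟨by omega⟩
  have hζne : ζ ≠ 1 := hζ.ne_one hn2
  have hζ1 : (1 : ℂ) - ζ ≠ 0 := sub_ne_zero.mpr (Ne.symm hζne)
  -- the cyclotomic field
  have hint : IsIntegral ℚ ζ := by
    refine ⟨Polynomial.X ^ n - 1, ?_, ?_⟩
    · simpa using Polynomial.monic_X_pow_sub_C (1 : ℚ) (by omega)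
    · simp [hζ.pow_eq_one]
  set N : ℕ+ := ⟨n, hn⟩ with hN
  set ζ' : ℚ⟮ζ⟯ := IntermediateField.AdjoinSimple.gen ℚ ζ with hζ'def
  have halg : algebraMap ℚ⟮ζ⟯ ℂ ζ' = ζ := IntermediateField.AdjoinSimple.algebraMap_gen ℚ ζ
  have hζ' : IsPrimitiveRoot ζ' n := by
    refine IsPrimitiveRoot.of_map_of_injective ?_ (algebraMap ℚ⟮ζ⟯ ℂ).injective
    rw [halg]; exact hζ
  haveI hcyc : IsCyclotomicExtension {n} ℚ ℚ⟮ζ⟯ := by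
    have H := IntermediateField.adjoin_simple_toSubalgebra_of_isAlgebraic hint.isAlgebraic
    refine IsCyclotomicExtension.equiv _ _ _ (h := ?_) (.refl : ℚ⟮ζ⟯.toSubalgebra ≃ₐ[ℚ] _)
    rw [H]
    exact IsPrimitiveRoot.adjoin_isCyclotomicExtension (n := n) ℚ hζ
  haveI : FiniteDimensional ℚ ℚ⟮ζ⟯ := IsCyclotomicExtension.finiteDimensional {n} ℚ ℚ⟮ζ⟯
  haveI hgal : IsGalois ℚ ℚ⟮ζ⟯ := IsCyclotomicExtension.isGalois {n} ℚ ℚ⟮ζ⟯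
  set fL : Fin n → ℕ → ℚ⟮ζ⟯ :=
    fun x c => ζ' ^ ((c - 1) * (x : ℕ)) / (1 - ζ' ^ (x : ℕ)) ^ c with hfL
  set T : ℚ⟮ζ⟯ := ∑ p ∈ msets n r ×ˢ indexSet3 k r s, ∏ i, fL (p.1 i) (p.2 i) with hT
  -- step A
  have stepA : ∑ a ∈ indexSet3 k r s, zbar n a ζ = algebraMap ℚ⟮ζ⟯ ℂ T := by
    have hmapT : algebraMap ℚ⟮ζ⟯ ℂ T = ∑ p ∈ msets n r ×ˢ indexSet3 k r s, ∏ i,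
        ζ ^ ((p.2 i - 1) * ((p.1 i : Fin n) : ℕ)) /
          (1 - ζ ^ ((p.1 i : Fin n) : ℕ)) ^ (p.2 i) := by
      rw [hT, map_sum]
      refine Finset.sum_congr rfl fun p _ => ?_
      rw [map_prod]
      refine Finset.prod_congr rfl fun i _ => ?_
      rw [hfL]
      simp only [map_div₀, map_pow, map_sub, map_one, halg]
    rw [hmapT, Finset.sum_product_right]
    refine Finset.sum_congr rfl fun a _ => ?_
    rw [zbar, z, Finset.mul_sum]
    refine Finset.sum_congr rfl fun m hm => ?_
    have hmem := mem_msets_iff.mp hm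
    have hfactor : ∏ i, ζ ^ ((a i - 1) * (m i : ℕ)) /
          ((1 - ζ ^ (m i : ℕ)) / (1 - ζ)) ^ (a i)
        = (∏ i, ζ ^ ((a i - 1) * (m i : ℕ)) / (1 - ζ ^ (m i : ℕ)) ^ (a i)) *
            (1 - ζ) ^ (∑ i, a i) := by
      rw [← Finset.prod_pow_eq_pow_sum, ← Finset.prod_mul_distrib]
      refine Finset.prod_congr rfl fun i _ => ?_
      rw [div_pow, div_div_eq_mul_div, mul_div_right_comm]
    rw [hfactor, mul_comm (∏ i, _), ← mul_assoc, inv_pow,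
      inv_mul_cancel₀ (pow_ne_zero _ hζ1), one_mul]
  -- step B : Galois invariance
  have hfix : ∀ σ : ℚ⟮ζ⟯ ≃ₐ[ℚ] ℚ⟮ζ⟯, σ T = T := by
    intro σ
    have hσpow : (σ ζ') ^ n = 1 := by rw [← map_pow, hζ'.pow_eq_one, map_one]
    obtain ⟨b, hblt, hb⟩ := hζ'.eq_pow_of_pow_eq_one hσpow
    set ε0 : Fin n → Fin n := fun x => ⟨(b * (x : ℕ)) % n, Nat.mod_lt _ hn⟩ with hε0
    have key : ∀ x : Fin n, ζ' ^ ((ε0 x : Fin n) : ℕ) = σ (ζ' ^ (x : ℕ)) := by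
      intro x
      rw [map_pow, ← hb, ← pow_mul]
      conv_rhs => rw [← Nat.div_add_mod (b * (x : ℕ)) n]
      rw [pow_add, pow_mul, hζ'.pow_eq_one, one_pow, one_mul]
    have hinj : Function.Injective ε0 := by
      intro x y hxy
      have h1 : σ (ζ' ^ (x : ℕ)) = σ (ζ' ^ (y : ℕ)) := by
        rw [← key, ← key, hxy]
      exact Fin.ext (hζ'.pow_inj x.isLt y.isLt (σ.injective h1))
    set ε : Equiv.Perm (Fin n) := Equiv.ofBijective ε0
      (Finite.injective_iff_bijective.mp hinj) with hεdef
    have hεapp : ∀ x, ε x = ε0 x := fun x => rfl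
    have hzero : ∀ x : Fin n, ((ε x : Fin n) : ℕ) = 0 ↔ (x : ℕ) = 0 := by
      intro x
      constructor
      · intro h
        have hσ1 : σ (ζ' ^ (x : ℕ)) = 1 := by
          rw [← key x, ← hεapp, h, pow_zero]
        have h2 : ζ' ^ (x : ℕ) = 1 := by
          apply σ.injective; rw [hσ1, map_one]
        exact hζ'.pow_inj x.isLt hn (by rw [h2, pow_zero])
      · intro h
        have h2 : ζ' ^ ((ε x : Fin n) : ℕ) = 1 := by
          rw [hεapp, key x, h, pow_zero, map_one]
        exact hζ'.pow_inj (ε x).isLt hn (by rw [h2, pow_zero])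
    have hε : ∀ x : Fin n, 0 < ((ε x : Fin n) : ℕ) ↔ 0 < (x : ℕ) := by
      intro x
      rw [Nat.pos_iff_ne_zero, Nat.pos_iff_ne_zero]
      exact not_congr (hzero x)
    have hσf : ∀ (x : Fin n) (c : ℕ), σ (fL x c) = fL (ε x) c := by
      intro x c
      have hnum : σ (ζ' ^ ((c - 1) * (x : ℕ))) = ζ' ^ ((c - 1) * ((ε x : Fin n) : ℕ)) := by
        rw [mul_comm (c - 1) (x : ℕ), pow_mul, map_pow, ← key x, ← pow_mul,
          mul_comm ((ε0 x : Fin n) : ℕ) (c - 1)]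
        rfl
      have hden : σ (ζ' ^ (x : ℕ)) = ζ' ^ ((ε x : Fin n) : ℕ) := (key x).symm
      rw [hfL]
      simp only [map_div₀, map_pow, map_sub, map_one, hnum, hden]
    have : σ T = ∑ p ∈ msets n r ×ˢ indexSet3 k r s, ∏ i, fL (ε (p.1 i)) (p.2 i) := by
      rw [hT, map_sum]
      refine Finset.sum_congr rfl fun p _ => ?_
      rw [map_prod]
      exact Finset.prod_congr rfl fun i _ => hσf _ _
    rw [this, hT]
    exact sum_comp_equiv fL ε hε
  -- step C : fixed points are rational
  have hbot : T ∈ (⊥ : IntermediateField ℚ ℚ⟮ζ⟯) := by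
    have htfae := (IsGalois.tfae (F := ℚ) (E := ℚ⟮ζ⟯)).out 0 1
    have hff : IntermediateField.fixedField (⊤ : Subgroup (ℚ⟮ζ⟯ ≃ₐ[ℚ] ℚ⟮ζ⟯)) = ⊥ :=
      htfae.mp hgal
    rw [← hff]
    rintro ⟨σ, -⟩
    exact hfix σ
  obtain ⟨c, hc⟩ := IntermediateField.mem_bot.mp hbot
  refine ⟨c, ?_⟩
  rw [stepA, ← hc, ← IsScalarTower.algebraMap_apply ℚ ℚ⟮ζ⟯ ℂ]
  exact eq_ratCast (algebraMap ℚ ℂ) c
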